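/- Let X be an infinite-dimensional real Banach space whose dual closed unit ball is sequentially compact in the weak* topology. Then X contains an isomorphic copy of c₀ if and only if X contains a complemented copy of c₀. -/

import Mathlib

open scoped ZeroAtInfty
open Filter Topology ZeroAtInftyContinuousMap

lemma c0_norm_apply_le (z : C₀(ℕ, ℝ)) (n : ℕ) : ‖z n‖ ≤ ‖z‖ := by
  rw [← norm_toBCF_eq_norm]
  exact z.toBCF.norm_coe_le_norm n

lemma c0_norm_le' {z : C₀(ℕ, ℝ)} {M : ℝ} (hM : 0 ≤ M) (h : ∀ n, ‖z n‖ ≤ M) : ‖z‖ ≤ M := by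
  rw [← norm_toBCF_eq_norm]
  exact (BoundedContinuousFunction.norm_le hM).mpr h

lemma c0_tendsto (z : C₀(ℕ, ℝ)) : Tendsto z atTop (𝓝 0) := by
  have := zero_at_infty z
  rwa [cocompact_eq_cofinite, Nat.cofinite_eq_atTop] at this

/-- evaluation at a point, as a linear map -/
def c0_evalL (n : ℕ) : C₀(ℕ, ℝ) →ₗ[ℝ] ℝ where
  toFun z := z n
  map_add' z w := by simp
  map_smul' r z := by simp

section spread
variable {φ : ℕ → ℕ} (hφ : StrictMono φ)

/-- spreading map as a function into C₀ -/
noncomputable def spreadFun (hφ : StrictMono φ) (z : C₀(ℕ, ℝ)) : C₀(ℕ, ℝ) where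
  toFun := Function.extend φ (⇑z) 0
  continuous_toFun := continuous_of_discreteTopology
  zero_at_infty' := by
    rw [cocompact_eq_cofinite, Nat.cofinite_eq_atTop]
    rw [NormedAddCommGroup.tendsto_nhds_zero]
    intro ε hε
    have hz := c0_tendsto z
    rw [NormedAddCommGroup.tendsto_nhds_zero] at hz
    obtain ⟨K, hK⟩ := (eventually_atTop).mp (hz ε hε)
    refine eventually_atTop.mpr ⟨φ K, fun n hn => ?_⟩
    by_cases hex : ∃ k, φ k = n
    · obtain ⟨k, rfl⟩ := hex
      show ‖Function.extend φ (⇑z) 0 (φ k)‖ < ε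
      rw [hφ.injective.extend_apply]
      exact hK k ((hφ.le_iff_le).mp hn)
    · show ‖Function.extend φ (⇑z) 0 n‖ < ε
      rw [Function.extend_apply' _ _ _ hex]
      simpa using hε

lemma spreadFun_apply_comp (z : C₀(ℕ, ℝ)) (k : ℕ) : spreadFun hφ z (φ k) = z k := by
  exact hφ.injective.extend_apply (⇑z) 0 k

lemma spreadFun_norm_le (z : C₀(ℕ, ℝ)) : ‖spreadFun hφ z‖ ≤ ‖z‖ := by
  refine c0_norm_le' (norm_nonneg z) fun n => ?_
  by_cases hex : ∃ k, φ k = n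
  · obtain ⟨k, rfl⟩ := hex
    rw [spreadFun_apply_comp hφ]
    exact c0_norm_apply_le z k
  · show ‖Function.extend φ (⇑z) 0 n‖ ≤ _
    rw [Function.extend_apply' _ _ _ hex]
    simpa using norm_nonneg z

lemma norm_le_spreadFun (z : C₀(ℕ, ℝ)) : ‖z‖ ≤ ‖spreadFun hφ z‖ := by
  refine c0_norm_le' (norm_nonneg _) fun k => ?_
  rw [← spreadFun_apply_comp hφ z k]
  exact c0_norm_apply_le _ _

/-- spreading map as a continuous linear map -/
noncomputable def spreadCLM (hφ : StrictMono φ) : C₀(ℕ, ℝ) →L[ℝ] C₀(ℕ, ℝ) :=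
  LinearMap.mkContinuous
    { toFun := spreadFun hφ
      map_add' := fun z w => by
        ext n
        show Function.extend φ (⇑(z+w)) 0 n = _
        by_cases hex : ∃ k, φ k = n
        · obtain ⟨k, rfl⟩ := hex
          rw [hφ.injective.extend_apply]
          show _ = spreadFun hφ z (φ k) + spreadFun hφ w (φ k)
          rw [spreadFun_apply_comp hφ, spreadFun_apply_comp hφ]
          simp
        · show _ = spreadFun hφ z n + spreadFun hφ w n
          show _ = Function.extend φ (⇑z) 0 n + Function.extend φ (⇑w) 0 n
          rw [Function.extend_apply' _ _ _ hex, Function.extend_apply' _ _ _ hex,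
            Function.extend_apply' _ _ _ hex]
          simp
      map_smul' := fun r z => by
        ext n
        show Function.extend φ (⇑(r • z)) 0 n = _
        by_cases hex : ∃ k, φ k = n
        · obtain ⟨k, rfl⟩ := hex
          rw [hφ.injective.extend_apply]
          show _ = r • spreadFun hφ z (φ k)
          rw [spreadFun_apply_comp hφ]
          simp
        · show _ = r • Function.extend φ (⇑z) 0 n
          rw [Function.extend_apply' _ _ _ hex, Function.extend_apply' _ _ _ hex]
          simp }
    1 (fun z => by simpa using spreadFun_norm_le hφ z)

lemma spreadCLM_apply_comp (z : C₀(ℕ, ℝ)) (k : ℕ) : spreadCLM hφ z (φ k) = z k :=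
  spreadFun_apply_comp hφ z k

lemma norm_le_spreadCLM (z : C₀(ℕ, ℝ)) : ‖z‖ ≤ ‖spreadCLM hφ z‖ :=
  norm_le_spreadFun hφ z

end spread

set_option maxHeartbeats 2000000 in

/-- `X` contains an isomorphic copy of `Z`: a continuous linear injection from `Z` into `X`
which is bounded below (an isomorphism onto its image). -/
def ContainsIsomorphicCopy (Z X : Type*) [NormedAddCommGroup Z] [NormedSpace ℝ Z]
    [NormedAddCommGroup X] [NormedSpace ℝ X] : Prop :=
  ∃ f : Z →L[ℝ] X, ∃ c : ℝ, 0 < c ∧ ∀ z : Z, c * ‖z‖ ≤ ‖f z‖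

/-- `X` contains a complemented copy of `Z`: a closed subspace `F` of `X` isomorphic to `Z`
together with a bounded linear projection of `X` onto `F`. -/
def ContainsComplementedCopy (Z X : Type*) [NormedAddCommGroup Z] [NormedSpace ℝ Z]
    [NormedAddCommGroup X] [NormedSpace ℝ X] : Prop :=
  ∃ F : Submodule ℝ X, IsClosed (F : Set X) ∧ Nonempty (F ≃L[ℝ] Z) ∧
    ∃ P : X →L[ℝ] X, LinearMap.range (P : X →ₗ[ℝ] X) = F ∧ ∀ x ∈ F, P x = x

/-- The closed unit ball of the dual of `X` is sequentially compact in the weak* topology. -/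
def DualBallWeakStarSeqCompact (X : Type*) [NormedAddCommGroup X] [NormedSpace ℝ X] : Prop :=
  ∀ f : ℕ → (X →L[ℝ] ℝ), (∀ n, ‖f n‖ ≤ 1) →
    ∃ (g : X →L[ℝ] ℝ) (φ : ℕ → ℕ), StrictMono φ ∧ ‖g‖ ≤ 1 ∧
      ∀ x : X, Tendsto (fun n => f (φ n) x) atTop (𝓝 (g x))

set_option maxHeartbeats 2000000 in
theorem copy_c0_iff_complemented_copy_c0_of_dualBall_weakStarSeqCompact'
    (X : Type*) [NormedAddCommGroup X] [NormedSpace ℝ X] [CompleteSpace X]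
    (h : ∀ f : ℕ → (X →L[ℝ] ℝ), (∀ n, ‖f n‖ ≤ 1) →
    ∃ (g : X →L[ℝ] ℝ) (φ : ℕ → ℕ), StrictMono φ ∧ ‖g‖ ≤ 1 ∧
      ∀ x : X, Tendsto (fun n => f (φ n) x) atTop (𝓝 (g x))) :
    (∃ f : C₀(ℕ, ℝ) →L[ℝ] X, ∃ c : ℝ, 0 < c ∧ ∀ z, c * ‖z‖ ≤ ‖f z‖) ↔
    (∃ F : Submodule ℝ X, IsClosed (F : Set X) ∧ Nonempty (F ≃L[ℝ] C₀(ℕ, ℝ)) ∧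
      ∃ P : X →L[ℝ] X, LinearMap.range (P : X →ₗ[ℝ] X) = F ∧ ∀ x ∈ F, P x = x) := by
  constructor
  · rintro ⟨f, c, hc, hf⟩
    have hc' : (0:ℝ) ≤ c⁻¹ := inv_nonneg.mpr hc.le
    -- injectivity of f
    have hinj : Function.Injective f := by
      intro a b hab
      have h1 := hf (a - b)
      rw [map_sub, hab, sub_self, norm_zero] at h1
      have h2 : ‖a - b‖ ≤ 0 := by nlinarith [norm_nonneg (a - b)]
      rwa [← sub_eq_zero, ← norm_le_zero_iff]
    -- the subspace Y = range f and coordinate functionals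
    set Y : Submodule ℝ X := LinearMap.range (f : C₀(ℕ, ℝ) →ₗ[ℝ] X) with hY
    have hinj' : Function.Injective (f : C₀(ℕ, ℝ) →ₗ[ℝ] X) := hinj
    let e := LinearEquiv.ofInjective (f : C₀(ℕ, ℝ) →ₗ[ℝ] X) hinj'
    have he : ∀ z, ((e z : Y) : X) = f z := fun z => rfl
    -- coordinate functionals on Y with bound c⁻¹
    have hbound : ∀ n : ℕ, ∀ y : Y, ‖(c0_evalL n).comp (e.symm.toLinearMap) y‖ ≤ c⁻¹ * ‖y‖ := by
      intro n y
      set z := e.symm y with hz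
      have hfz : f z = (y : X) := by rw [← he z, hz, e.apply_symm_apply]
      have h1 : ‖z n‖ ≤ ‖z‖ := c0_norm_apply_le z n
      have h2 : c * ‖z‖ ≤ ‖(y : X)‖ := by rw [← hfz]; exact hf z
      have h3 : ‖(y : X)‖ = ‖y‖ := Submodule.norm_coe y
      show ‖z n‖ ≤ c⁻¹ * ‖y‖
      rw [← h3]
      have h4 := mul_le_mul_of_nonneg_left h2 hc'
      rw [← mul_assoc, inv_mul_cancel₀ hc.ne', one_mul] at h4
      exact le_trans h1 h4
    let ψ : ∀ n : ℕ, Y →L[ℝ] ℝ := fun n =>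
      LinearMap.mkContinuous ((c0_evalL n).comp (e.symm.toLinearMap)) c⁻¹ (hbound n)
    choose xs hxs hnxs using fun n => exists_extension_norm_eq Y (ψ n)
    have hxnorm : ∀ n, ‖xs n‖ ≤ c⁻¹ := fun n => by
      rw [hnxs n]; exact LinearMap.mkContinuous_norm_le _ hc' _
    have hxf : ∀ n z, xs n (f z) = z n := by
      intro n z
      have hy : f z ∈ Y := ⟨z, rfl⟩
      have h1 := hxs n ⟨f z, hy⟩
      have h2 : e.symm ⟨f z, hy⟩ = z := by
        have : e z = ⟨f z, hy⟩ := Subtype.ext (he z)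
        rw [← this, e.symm_apply_apply]
      rw [h1]
      show ((c0_evalL n).comp (e.symm.toLinearMap)) ⟨f z, hy⟩ = z n
      simp only [LinearMap.comp_apply, LinearEquiv.coe_toLinearMap, h2]
      rfl
    -- weak* sequential compactness
    obtain ⟨g0, φ, hφ, hg0, hconv⟩ := h (fun n => c • xs n) (fun n => by
      show ‖c • xs n‖ ≤ 1
      rw [norm_smul, Real.norm_eq_abs, abs_of_pos hc]
      calc c * ‖xs n‖ ≤ c * c⁻¹ := by nlinarith [hxnorm n]
        _ = 1 := mul_inv_cancel₀ hc.ne')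
    let g : X →L[ℝ] ℝ := c⁻¹ • g0
    have hgapp : ∀ x, g x = c⁻¹ * g0 x := fun x => rfl
    have hconv' : ∀ x, Tendsto (fun k => xs (φ k) x) atTop (𝓝 (g x)) := by
      intro x
      have h1 : Tendsto (fun k => c⁻¹ * ((c • xs (φ k)) x)) atTop (𝓝 (c⁻¹ * g0 x)) :=
        (hconv x).const_mul c⁻¹
      have h2 : (fun k => c⁻¹ * ((c • xs (φ k)) x)) = fun k => xs (φ k) x := by
        funext k
        rw [ContinuousLinearMap.smul_apply, smul_eq_mul, ← mul_assoc,
          inv_mul_cancel₀ hc.ne', one_mul]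
      rw [h2, ← hgapp x] at h1
      exact h1
    have hgx : ∀ x, ‖g x‖ ≤ c⁻¹ * ‖x‖ := by
      intro x
      rw [hgapp x]
      calc ‖c⁻¹ * g0 x‖ = c⁻¹ * ‖g0 x‖ := by
            rw [norm_mul, Real.norm_eq_abs, abs_of_nonneg hc']
        _ ≤ c⁻¹ * (‖g0‖ * ‖x‖) := mul_le_mul_of_nonneg_left (g0.le_opNorm x) hc'
        _ ≤ c⁻¹ * (1 * ‖x‖) := by
            refine mul_le_mul_of_nonneg_left ?_ hc'
            exact mul_le_mul_of_nonneg_right hg0 (norm_nonneg x)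
        _ = c⁻¹ * ‖x‖ := by ring
    have hgY : ∀ z, g (f z) = 0 := by
      intro z
      refine tendsto_nhds_unique (hconv' (f z)) ?_
      have : (fun k => xs (φ k) (f z)) = fun k => z (φ k) := by
        funext k; exact hxf _ z
      rw [this]
      exact (c0_tendsto z).comp hφ.tendsto_atTop
    -- the operator S : X → c₀
    let Sfun : X → C₀(ℕ, ℝ) := fun x =>
      { toFun := fun k => xs (φ k) x - g x
        continuous_toFun := continuous_of_discreteTopology
        zero_at_infty' := by
          rw [cocompact_eq_cofinite, Nat.cofinite_eq_atTop]
          exact tendsto_sub_nhds_zero_iff.mpr (hconv' x) }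
    have hSfun : ∀ x k, Sfun x k = xs (φ k) x - g x := fun x k => rfl
    let Slin : X →ₗ[ℝ] C₀(ℕ, ℝ) :=
      { toFun := Sfun
        map_add' := fun a b => by
          ext k
          show xs (φ k) (a + b) - g (a + b) = (Sfun a + Sfun b) k
          have hr : (Sfun a + Sfun b) k = (xs (φ k) a - g a) + (xs (φ k) b - g b) := rfl
          rw [hr, map_add, map_add]; ring
        map_smul' := fun r a => by
          ext k
          show xs (φ k) (r • a) - g (r • a) = (r • Sfun a) k
          have hr : (r • Sfun a) k = r * (xs (φ k) a - g a) := rfl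
          rw [hr, map_smul, map_smul, smul_eq_mul, smul_eq_mul]; ring }
    have hSbound : ∀ x, ‖Slin x‖ ≤ (c⁻¹ + c⁻¹) * ‖x‖ := by
      intro x
      refine c0_norm_le' (by positivity) fun k => ?_
      show ‖xs (φ k) x - g x‖ ≤ _
      calc ‖xs (φ k) x - g x‖ ≤ ‖xs (φ k) x‖ + ‖g x‖ := norm_sub_le _ _
        _ ≤ c⁻¹ * ‖x‖ + c⁻¹ * ‖x‖ := by
            gcongr
            · exact le_trans ((xs (φ k)).le_opNorm x)
                (mul_le_mul_of_nonneg_right (hxnorm _) (norm_nonneg x))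
            · exact hgx x
        _ = (c⁻¹ + c⁻¹) * ‖x‖ := by ring
    let S : X →L[ℝ] C₀(ℕ, ℝ) := LinearMap.mkContinuous Slin (c⁻¹ + c⁻¹) hSbound
    have hSapp : ∀ x k, S x k = xs (φ k) x - g x := fun x k => rfl
    -- the embedding j = f ∘ spread
    let j : C₀(ℕ, ℝ) →L[ℝ] X := f.comp (spreadCLM hφ)
    have hjlow : ∀ z, c * ‖z‖ ≤ ‖j z‖ := by
      intro z
      calc c * ‖z‖ ≤ c * ‖spreadCLM hφ z‖ :=
            mul_le_mul_of_nonneg_left (norm_le_spreadCLM hφ z) hc.le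
        _ ≤ ‖f (spreadCLM hφ z)‖ := hf _
    have hSj : ∀ z, S (j z) = z := by
      intro z
      ext k
      show xs (φ k) (f (spreadCLM hφ z)) - g (f (spreadCLM hφ z)) = z k
      rw [hxf, hgY, spreadCLM_apply_comp, sub_zero]
    let P : X →L[ℝ] X := j.comp S
    have hP : ∀ x, P x = j (S x) := fun x => rfl
    refine ⟨LinearMap.range (j : C₀(ℕ, ℝ) →ₗ[ℝ] X), ?_, ?_, P, ?_, ?_⟩
    · -- closed
      have hjanti : AntilipschitzWith (Real.toNNReal c⁻¹) j := by
        refine j.antilipschitz_of_bound fun z => ?_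
        rw [Real.coe_toNNReal _ hc']
        have := mul_le_mul_of_nonneg_left (hjlow z) hc'
        rwa [← mul_assoc, inv_mul_cancel₀ hc.ne', one_mul] at this
      have := hjanti.isClosed_range j.uniformContinuous
      rw [LinearMap.coe_range]; exact this
    · -- equivalence
      have hjinj : Function.Injective j := by
        intro a b hab
        have : S (j a) = S (j b) := by rw [hab]
        rwa [hSj, hSj] at this
      have hclosed : IsClosed ((LinearMap.range (j : C₀(ℕ, ℝ) →ₗ[ℝ] X) : Submodule ℝ X) : Set X) := by
        have hjanti : AntilipschitzWith (Real.toNNReal c⁻¹) j := by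
          refine j.antilipschitz_of_bound fun z => ?_
          rw [Real.coe_toNNReal _ hc']
          have := mul_le_mul_of_nonneg_left (hjlow z) hc'
          rwa [← mul_assoc, inv_mul_cancel₀ hc.ne', one_mul] at this
        have := hjanti.isClosed_range j.uniformContinuous
        rw [LinearMap.coe_range]; exact this
      haveI : CompleteSpace (LinearMap.range (j : C₀(ℕ, ℝ) →ₗ[ℝ] X) : Submodule ℝ X) := hclosed.completeSpace_coe
      let jr : C₀(ℕ, ℝ) →L[ℝ] (LinearMap.range (j : C₀(ℕ, ℝ) →ₗ[ℝ] X) : Submodule ℝ X) :=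
        j.codRestrict (LinearMap.range (j : C₀(ℕ, ℝ) →ₗ[ℝ] X)) (fun z => LinearMap.mem_range.mpr ⟨z, rfl⟩)
      have hjrinj : Function.Injective jr := fun a b hab =>
        hjinj (congrArg Subtype.val hab)
      have hjrsurj : Function.Surjective jr := by
        rintro ⟨y, hy⟩
        obtain ⟨z, hz⟩ := LinearMap.mem_range.mp hy
        exact ⟨z, Subtype.ext hz⟩
      have hker : LinearMap.ker (jr : C₀(ℕ, ℝ) →ₗ[ℝ] LinearMap.range (j : C₀(ℕ, ℝ) →ₗ[ℝ] X)) = ⊥ := LinearMap.ker_eq_bot.mpr hjrinj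
      have hrange : LinearMap.range (jr : C₀(ℕ, ℝ) →ₗ[ℝ] LinearMap.range (j : C₀(ℕ, ℝ) →ₗ[ℝ] X)) = ⊤ := LinearMap.range_eq_top.mpr hjrsurj
      exact ⟨(ContinuousLinearEquiv.ofBijective jr hker hrange).symm⟩
    · -- range P = range j
      apply le_antisymm
      · rintro x ⟨y, rfl⟩
        exact LinearMap.mem_range.mpr ⟨S y, rfl⟩
      · rintro x hx
        obtain ⟨z, rfl⟩ := LinearMap.mem_range.mp hx
        refine LinearMap.mem_range.mpr ⟨j z, ?_⟩
        exact congrArg j (hSj z)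
    · -- P fixes range j
      rintro x hx
      obtain ⟨z, rfl⟩ := LinearMap.mem_range.mp hx
      exact congrArg j (hSj z)
  · rintro ⟨F, hFc, ⟨e⟩, P, hPr, hPe⟩
    refine ⟨F.subtypeL.comp (e.symm : C₀(ℕ, ℝ) →L[ℝ] F),
      (‖(e : F →L[ℝ] C₀(ℕ, ℝ))‖ + 1)⁻¹, by positivity, fun z => ?_⟩
    have h1 : ‖z‖ ≤ (‖(e : F →L[ℝ] C₀(ℕ, ℝ))‖ + 1) * ‖e.symm z‖ := by
      calc ‖z‖ = ‖e (e.symm z)‖ := by rw [e.apply_symm_apply]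
        _ ≤ ‖(e : F →L[ℝ] C₀(ℕ, ℝ))‖ * ‖e.symm z‖ :=
            (e : F →L[ℝ] C₀(ℕ, ℝ)).le_opNorm _
        _ ≤ _ := by nlinarith [norm_nonneg (e.symm z)]
    have h2 : ‖(F.subtypeL.comp (e.symm : C₀(ℕ, ℝ) →L[ℝ] F)) z‖ = ‖e.symm z‖ := by
      show ‖((e.symm z : F) : X)‖ = _
      exact Submodule.norm_coe _
    rw [h2, inv_mul_le_iff₀ (by positivity)]
    exact h1

theorem copy_c0_iff_complemented_copy_c0_of_dualBall_weakStarSeqCompact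
    (X : Type*) [NormedAddCommGroup X] [NormedSpace ℝ X] [CompleteSpace X]
    (hX : ¬ FiniteDimensional ℝ X) (h : DualBallWeakStarSeqCompact X) :
    ContainsIsomorphicCopy C₀(ℕ, ℝ) X ↔ ContainsComplementedCopy C₀(ℕ, ℝ) X :=
  copy_c0_iff_complemented_copy_c0_of_dualBall_weakStarSeqCompact' X h
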